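/- Let ξ be an ℝ^m-valued random vector on a probability space and g : ℝ^m × ℝ^n → ℝ be such that g(ξ,x) is integrable for every x. Suppose there is a neighborhood X of a point x̂ ∈ ℝ^n such that: (a) for each x ∈ X there is a measurable set Ξ ⊂ ℝ^m with prob{ξ ∈ Ξ} = 1 such that g(ξ,·) is continuously differentiable at x for every ξ ∈ Ξ; (b) there are ε > 0 and δ ∈ (0,1] with prob{g(ξ,x) ≥ ε} ≥ δ for all x ∈ X; (c) there is a measurable h : ℝ^m → [0,∞) with E[h(ξ)] < ∞ and |g(ξ,x)| ≤ h(ξ) for all ξ ∈ ℝ^m, x ∈ X; (d) there is a measurable κ : ℝ^m → [0,∞) with E[κ(ξ)] < ∞ and |g(ξ,x) − g(ξ,x′)| ≤ κ(ξ)·‖x − x′‖₂ for all x, x′ ∈ X and ξ ∈ ℝ^m; (e) for every γ > 0 and x ∈ X, prob{γ·g(ξ,x) = −1} = 0; and (f) the minimizer set Γ(x̂) consists of a single point γ̂. Then the function p̄(x) = inf_{γ ≥ 0} E[max(0, γ·g(ξ,x) + 1)] is differentiable at x̂ with gradient ∇p̄(x̂) = E[F(ξ, x̂, γ̂)], where F(ξ,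 x̂, γ̂) = 0 if γ̂·g(ξ,x̂) + 1 ≤ 0 and F(ξ, x̂, γ̂) = γ̂·∇ₓg(ξ,x̂) otherwise. -/

import Mathlib

open MeasureTheory Filter Topology
set_option linter.unusedSectionVars false
set_option linter.unusedVariables false

section BFPAux

variable {m n : ℕ} {Ω : Type*} [MeasurableSpace Ω] (P : Measure Ω) [IsProbabilityMeasure P]
  (ξ : Ω → EuclideanSpace ℝ (Fin m))
  (g : EuclideanSpace ℝ (Fin m) → EuclideanSpace ℝ (Fin n) → ℝ)

/-- The inner expectation in the Norton–Uryasev formula. -/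
noncomputable def bfpPsi (x : EuclideanSpace ℝ (Fin n)) (γ : ℝ) : ℝ :=
  ∫ ω, max 0 (γ * g (ξ ω) x + 1) ∂P

lemma bfp_inv_mul_cancel {r C : ℝ} (hr : 0 < r) : r⁻¹ * (C * r) = C := by
  field_simp

lemma bfp_abs_max_le (a b : ℝ) : |max 0 (a + 1) - max 0 (b + 1)| ≤ |a - b| := by
  have h := abs_max_sub_max_le_abs (a + 1) (b + 1) 0
  simpa [max_comm, add_sub_add_right_eq_sub] using h

variable (hint : ∀ x : EuclideanSpace ℝ (Fin n), Integrable (fun ω => g (ξ ω) x) P)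

include hint in
lemma bfp_integrable_u (γ : ℝ) (x : EuclideanSpace ℝ (Fin n)) :
    Integrable (fun ω => max 0 (γ * g (ξ ω) x + 1)) P := by
  have hmeas : AEStronglyMeasurable (fun ω => max 0 (γ * g (ξ ω) x + 1)) P := by
    have := (((hint x).1.aemeasurable.const_mul γ).add_const 1)
    exact (aemeasurable_const.max this).aestronglyMeasurable
  have hbd : Integrable (fun ω => |γ| * |g (ξ ω) x| + 1) P := by
    exact ((hint x).abs.const_mul |γ|).add (integrable_const 1)
  refine Integrable.mono' hbd hmeas ?_
  filter_upwards with ω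
  have h0 : (0:ℝ) ≤ max 0 (γ * g (ξ ω) x + 1) := le_max_left _ _
  rw [Real.norm_eq_abs, abs_of_nonneg h0]
  rcases max_cases 0 (γ * g (ξ ω) x + 1) with ⟨h, _⟩ | ⟨h, _⟩
  · rw [h]; positivity
  · rw [h]
    have : γ * g (ξ ω) x ≤ |γ| * |g (ξ ω) x| := le_trans (le_abs_self _) (by rw [abs_mul])
    linarith

include hint in
lemma bfp_psi_nonneg (x : EuclideanSpace ℝ (Fin n)) (γ : ℝ) : 0 ≤ bfpPsi P ξ g x γ :=
  integral_nonneg fun ω => le_max_left _ _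

lemma bfp_psi_zero (x : EuclideanSpace ℝ (Fin n)) : bfpPsi P ξ g x 0 = 1 := by
  unfold bfpPsi
  simp


variable {X : Set (EuclideanSpace ℝ (Fin n))}
  {h : EuclideanSpace ℝ (Fin m) → ℝ}
  (hbound : ∀ z : EuclideanSpace ℝ (Fin m), ∀ x ∈ X, |g z x| ≤ h z)
  (hinth : Integrable (fun ω => h (ξ ω)) P)
  {κ : EuclideanSpace ℝ (Fin m) → ℝ}
  (hlip : ∀ z : EuclideanSpace ℝ (Fin m), ∀ x ∈ X, ∀ x' ∈ X,
        |g z x - g z x'| ≤ κ z * ‖x - x'‖)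
  (hintκ : Integrable (fun ω => κ (ξ ω)) P)

include hint hbound hinth in
lemma bfp_psi_lip_gamma {x : EuclideanSpace ℝ (Fin n)} (hx : x ∈ X) (γ γ' : ℝ) :
    |bfpPsi P ξ g x γ - bfpPsi P ξ g x γ'| ≤ |γ - γ'| * ∫ ω, h (ξ ω) ∂P := by
  unfold bfpPsi
  rw [← integral_sub (bfp_integrable_u P ξ g hint γ x) (bfp_integrable_u P ξ g hint γ' x)]
  calc |∫ ω, (max 0 (γ * g (ξ ω) x + 1) - max 0 (γ' * g (ξ ω) x + 1)) ∂P|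
      ≤ ∫ ω, |max 0 (γ * g (ξ ω) x + 1) - max 0 (γ' * g (ξ ω) x + 1)| ∂P := by
        simpa [Real.norm_eq_abs] using
          norm_integral_le_integral_norm
            (fun ω => max 0 (γ * g (ξ ω) x + 1) - max 0 (γ' * g (ξ ω) x + 1)) (μ := P)
    _ ≤ ∫ ω, |γ - γ'| * h (ξ ω) ∂P := by
        refine integral_mono ((bfp_integrable_u P ξ g hint γ x).sub
          (bfp_integrable_u P ξ g hint γ' x)).abs (hinth.const_mul _) ?_
        intro ω
        dsimp only
        refine le_trans (bfp_abs_max_le _ _) ?_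
        rw [← sub_mul, abs_mul]
        exact mul_le_mul_of_nonneg_left (hbound (ξ ω) x hx) (abs_nonneg _)
    _ = |γ - γ'| * ∫ ω, h (ξ ω) ∂P := integral_const_mul _ _

include hint hlip hintκ in
lemma bfp_psi_lip_x {x x' : EuclideanSpace ℝ (Fin n)} (hx : x ∈ X) (hx' : x' ∈ X)
    {γ : ℝ} (hγ : 0 ≤ γ) :
    |bfpPsi P ξ g x γ - bfpPsi P ξ g x' γ| ≤ γ * (∫ ω, κ (ξ ω) ∂P) * ‖x - x'‖ := by
  unfold bfpPsi
  rw [← integral_sub (bfp_integrable_u P ξ g hint γ x) (bfp_integrable_u P ξ g hint γ x')]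
  calc |∫ ω, (max 0 (γ * g (ξ ω) x + 1) - max 0 (γ * g (ξ ω) x' + 1)) ∂P|
      ≤ ∫ ω, |max 0 (γ * g (ξ ω) x + 1) - max 0 (γ * g (ξ ω) x' + 1)| ∂P := by
        simpa [Real.norm_eq_abs] using
          norm_integral_le_integral_norm
            (fun ω => max 0 (γ * g (ξ ω) x + 1) - max 0 (γ * g (ξ ω) x' + 1)) (μ := P)
    _ ≤ ∫ ω, γ * κ (ξ ω) * ‖x - x'‖ ∂P := by
        refine integral_mono ((bfp_integrable_u P ξ g hint γ x).sub
          (bfp_integrable_u P ξ g hint γ x')).abs ((hintκ.const_mul γ).mul_const _) ?_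
        intro ω
        dsimp only
        refine le_trans (bfp_abs_max_le _ _) ?_
        rw [← mul_sub, abs_mul, abs_of_nonneg hγ, mul_assoc]
        exact mul_le_mul_of_nonneg_left (hlip (ξ ω) x hx x' hx') hγ
    _ = γ * (∫ ω, κ (ξ ω) ∂P) * ‖x - x'‖ := by
        have hrw : ∀ ω, γ * κ (ξ ω) * ‖x - x'‖ = (γ * ‖x - x'‖) * κ (ξ ω) := by
          intro ω; ring
        simp_rw [hrw]
        rw [integral_const_mul]; ring


include hint in
lemma bfp_coercive {ε δ : ℝ} (hε : 0 < ε) (hδ : 0 < δ)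
    {x : EuclideanSpace ℝ (Fin n)} (hpb : ENNReal.ofReal δ ≤ P {ω | ε ≤ g (ξ ω) x})
    {γ : ℝ} (hγ : 0 ≤ γ) : (γ * ε + 1) * δ ≤ bfpPsi P ξ g x γ := by
  have hs : NullMeasurableSet {ω | ε ≤ g (ξ ω) x} P :=
    (hint x).1.aemeasurable.nullMeasurable measurableSet_Ici
  obtain ⟨t, hts, htm, hteq⟩ := hs.exists_measurable_subset_ae_eq
  have hPt : δ ≤ (P t).toReal := by
    have h1 : ENNReal.ofReal δ ≤ P t := by
      rw [measure_congr hteq]; exact hpb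
    have := ENNReal.toReal_mono (measure_ne_top P t) h1
    rwa [ENNReal.toReal_ofReal hδ.le] at this
  have hind : ∫ ω, t.indicator (fun _ => γ * ε + 1) ω ∂P ≤ bfpPsi P ξ g x γ := by
    refine integral_mono_ae ((integrable_const _).indicator htm)
      (bfp_integrable_u P ξ g hint γ x) ?_
    filter_upwards with ω
    by_cases hω : ω ∈ t
    · rw [Set.indicator_of_mem hω]
      have hge : ε ≤ g (ξ ω) x := hts hω
      have : γ * ε + 1 ≤ γ * g (ξ ω) x + 1 := by
        have := mul_le_mul_of_nonneg_left hge hγ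
        linarith
      exact this.trans (le_max_right _ _)
    · rw [Set.indicator_of_notMem hω]
      exact le_max_left _ _
  have hval : ∫ ω, t.indicator (fun _ => γ * ε + 1) ω ∂P = (P t).toReal * (γ * ε + 1) := by
    rw [integral_indicator_const _ htm, smul_eq_mul]
    rfl
  have hnn : (0:ℝ) ≤ γ * ε + 1 := by positivity
  calc (γ * ε + 1) * δ ≤ (γ * ε + 1) * (P t).toReal := by
        exact mul_le_mul_of_nonneg_left hPt hnn
    _ = ∫ ω, t.indicator (fun _ => γ * ε + 1) ω ∂P := by rw [hval, mul_comm]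
    _ ≤ bfpPsi P ξ g x γ := hind

variable (hpos : ∀ z, 0 ≤ h z)

include hint hbound hinth hpos in
lemma bfp_exists_min {ε δ : ℝ} (hε : 0 < ε) (hδ : 0 < δ)
    {x : EuclideanSpace ℝ (Fin n)} (hx : x ∈ X)
    (hpb : ENNReal.ofReal δ ≤ P {ω | ε ≤ g (ξ ω) x}) :
    ∃ γx : ℝ, γx ∈ Set.Icc (0:ℝ) (1/(δ*ε)) ∧
      (∀ γ' : ℝ, 0 ≤ γ' → bfpPsi P ξ g x γx ≤ bfpPsi P ξ g x γ') ∧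
      (⨅ γ : Set.Ici (0:ℝ), bfpPsi P ξ g x ↑γ) = bfpPsi P ξ g x γx := by
  have hM0 : (0:ℝ) ≤ 1/(δ*ε) := by positivity
  have hH0 : (0:ℝ) ≤ ∫ ω, h (ξ ω) ∂P := integral_nonneg fun ω => hpos _
  have hlipγ : LipschitzWith (Real.toNNReal (∫ ω, h (ξ ω) ∂P)) (bfpPsi P ξ g x) := by
    refine LipschitzWith.of_dist_le_mul fun γ γ' => ?_
    rw [Real.dist_eq, Real.dist_eq, Real.coe_toNNReal _ hH0]
    rw [mul_comm]
    exact bfp_psi_lip_gamma P ξ g hint hbound hinth hx γ γ'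
  obtain ⟨γx, hγxmem, hγxmin⟩ := isCompact_Icc.exists_isMinOn
    (Set.nonempty_Icc.mpr hM0) hlipγ.continuous.continuousOn
  have hglobal : ∀ γ' : ℝ, 0 ≤ γ' → bfpPsi P ξ g x γx ≤ bfpPsi P ξ g x γ' := by
    intro γ' hγ'
    by_cases hle : γ' ≤ 1/(δ*ε)
    · exact hγxmin ⟨hγ', hle⟩
    · push_neg at hle
      have hco := bfp_coercive P ξ g hint hε hδ hpb hγ'
      have h0 : bfpPsi P ξ g x γx ≤ bfpPsi P ξ g x 0 := hγxmin ⟨le_rfl, hM0⟩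
      rw [bfp_psi_zero] at h0
      have hkey : (1:ℝ) ≤ (γ' * ε + 1) * δ := by
        have h2 : 1/(δ*ε) * (ε * δ) = 1 := by
          field_simp
        have h3 : 1/(δ*ε) * (ε * δ) ≤ γ' * (ε * δ) :=
          mul_le_mul_of_nonneg_right hle.le (by positivity)
        nlinarith
      linarith
  refine ⟨γx, hγxmem, hglobal, ?_⟩
  have hbdd : BddBelow (Set.range fun γ : Set.Ici (0:ℝ) => bfpPsi P ξ g x ↑γ) := by
    refine ⟨0, ?_⟩
    rintro _ ⟨γ, rfl⟩
    exact bfp_psi_nonneg P ξ g hint x _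
  refine le_antisymm (ciInf_le hbdd ⟨γx, hγxmem.1⟩) (le_ciInf fun γ => hglobal ↑γ γ.2)

include hint in
lemma bfp_min_le_M {ε δ : ℝ} (hε : 0 < ε) (hδ : 0 < δ)
    {x : EuclideanSpace ℝ (Fin n)} (hpb : ENNReal.ofReal δ ≤ P {ω | ε ≤ g (ξ ω) x})
    {γ : ℝ} (hγ : 0 ≤ γ) (hψ : bfpPsi P ξ g x γ ≤ 1) : γ ≤ 1/(δ*ε) := by
  have hco := bfp_coercive P ξ g hint hε hδ hpb hγ
  have h1 : (γ * ε + 1) * δ ≤ 1 := hco.trans hψ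
  by_contra hgt
  push_neg at hgt
  have h2 : 1/(δ*ε) * (ε * δ) = 1 := by
    field_simp
  have h3 : 1/(δ*ε) * (ε * δ) < γ * (ε * δ) := by
    exact mul_lt_mul_of_pos_right hgt (by positivity)
  nlinarith


include hlip in
lemma bfp_grad_bound {xhat : EuclideanSpace ℝ (Fin n)} (hX : X ∈ nhds xhat)
    (hκ0 : ∀ z, 0 ≤ κ z) {z : EuclideanSpace ℝ (Fin m)}
    (hdiff : DifferentiableAt ℝ (g z) xhat) : ‖gradient (g z) xhat‖ ≤ κ z := by
  have hfd := hdiff.hasGradientAt.hasFDerivAt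
  have hlipon : LipschitzOnWith (Real.toNNReal (κ z)) (g z) X := by
    rw [lipschitzOnWith_iff_dist_le_mul]
    intro x hx x' hx'
    rw [Real.dist_eq, dist_eq_norm, Real.coe_toNNReal _ (hκ0 z)]
    exact hlip z x hx x' hx'
  have hb := hfd.le_of_lipschitzOn hX hlipon
  rwa [LinearIsometryEquiv.norm_map, Real.coe_toNNReal _ (hκ0 z)] at hb

include hint in
lemma bfp_grad_aesm {xhat : EuclideanSpace ℝ (Fin n)}
    {Ξ : Set (EuclideanSpace ℝ (Fin m))} (hΞae : ∀ᵐ ω ∂P, ξ ω ∈ Ξ)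
    (hΞdiff : ∀ z ∈ Ξ, DifferentiableAt ℝ (g z) xhat) :
    AEStronglyMeasurable (fun ω => gradient (g (ξ ω)) xhat) P := by
  set b := EuclideanSpace.basisFun (Fin n) ℝ with hb
  set V : ℕ → Ω → EuclideanSpace ℝ (Fin n) := fun k ω =>
    ∑ i, (((k:ℝ)+1) * (g (ξ ω) (xhat + ((k:ℝ)+1)⁻¹ • (b i)) - g (ξ ω) xhat)) • (b i) with hV
  have hVm : ∀ k, AEMeasurable (V k) P := by
    intro k
    refine Finset.aemeasurable_fun_sum _ fun i _ => ?_
    exact ((((hint _).1.aemeasurable.sub (hint xhat).1.aemeasurable).const_mul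
      _).smul_const _)
  have hc0 : Tendsto (fun k : ℕ => ((k:ℝ)+1)) atTop atTop :=
    tendsto_atTop_add_const_right atTop 1 tendsto_natCast_atTop_atTop
  have hc : Tendsto (fun k : ℕ => ‖((k:ℝ)+1)‖) atTop atTop := by
    refine hc0.congr fun k => ?_
    rw [Real.norm_eq_abs, abs_of_nonneg (by positivity)]
  have htend : ∀ᵐ ω ∂P, Tendsto (fun k => V k ω) atTop (𝓝 (gradient (g (ξ ω)) xhat)) := by
    filter_upwards [hΞae] with ω hω
    have hfd := (hΞdiff (ξ ω) hω).hasGradientAt.hasFDerivAt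
    have hsum : ∑ i, (inner ℝ (gradient (g (ξ ω)) xhat) (b i) : ℝ) • (b i)
        = gradient (g (ξ ω)) xhat := by
      have := b.sum_repr' (gradient (g (ξ ω)) xhat)
      simp_rw [real_inner_comm] at this
      exact this
    rw [← hsum]
    refine tendsto_finset_sum _ fun i _ => ?_
    have hlim := hfd.lim (b i) (c := fun k : ℕ => ((k:ℝ)+1)) hc
    have : (InnerProductSpace.toDual ℝ (EuclideanSpace ℝ (Fin n))
        (gradient (g (ξ ω)) xhat)) (b i) = inner ℝ (gradient (g (ξ ω)) xhat) (b i) :=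
      InnerProductSpace.toDual_apply_apply
    rw [this] at hlim
    simpa [smul_eq_mul] using hlim.smul_const (b i)
  exact (aemeasurable_of_tendsto_metrizable_ae atTop hVm htend).aestronglyMeasurable


include hint hlip hintκ in
lemma bfp_F_integrable {xhat : EuclideanSpace ℝ (Fin n)} (hX : X ∈ nhds xhat)
    (hκ0 : ∀ z, 0 ≤ κ z)
    {Ξ : Set (EuclideanSpace ℝ (Fin m))} (hΞae : ∀ᵐ ω ∂P, ξ ω ∈ Ξ)
    (hΞdiff : ∀ z ∈ Ξ, DifferentiableAt ℝ (g z) xhat)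
    {γhat : ℝ} (hγhat0 : 0 ≤ γhat) :
    Integrable (fun ω => if γhat * g (ξ ω) xhat + 1 ≤ 0 then 0
      else γhat • gradient (g (ξ ω)) xhat) P := by
  have hgrad : AEStronglyMeasurable (fun ω => gradient (g (ξ ω)) xhat) P :=
    bfp_grad_aesm P ξ g hint hΞae hΞdiff
  have hv : AEStronglyMeasurable (fun ω => γhat • gradient (g (ξ ω)) xhat) P :=
    hgrad.const_smul γhat
  have hcae : AEMeasurable (fun ω => γhat * g (ξ ω) xhat + 1) P :=
    ((hint xhat).1.aemeasurable.const_mul γhat).add_const 1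
  have hFm : AEStronglyMeasurable (fun ω => if γhat * g (ξ ω) xhat + 1 ≤ 0 then 0
      else γhat • gradient (g (ξ ω)) xhat) P := by
    classical
    obtain ⟨c', hc'm, hc'e⟩ : ∃ c', Measurable c' ∧
        (fun ω => γhat * g (ξ ω) xhat + 1) =ᵐ[P] c' :=
      ⟨hcae.mk _, hcae.measurable_mk, hcae.ae_eq_mk⟩
    obtain ⟨v', hv'm, hv'e⟩ : ∃ v', StronglyMeasurable v' ∧
        (fun ω => γhat • gradient (g (ξ ω)) xhat) =ᵐ[P] v' :=
      ⟨hv.mk _, hv.stronglyMeasurable_mk, hv.ae_eq_mk⟩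
    have hwm : StronglyMeasurable (fun ω => if c' ω ≤ 0 then (0 : EuclideanSpace ℝ (Fin n))
        else v' ω) := by
      have hs : MeasurableSet {ω | c' ω ≤ 0} := hc'm measurableSet_Iic
      have heq : (fun ω => if c' ω ≤ 0 then (0 : EuclideanSpace ℝ (Fin n)) else v' ω)
          = Set.piecewise {ω | c' ω ≤ 0} (fun _ => (0 : EuclideanSpace ℝ (Fin n))) v' := by
        funext ω
        by_cases hω : c' ω ≤ 0 <;> simp [Set.piecewise, hω]
      rw [heq]
      exact @StronglyMeasurable.piecewise Ω (EuclideanSpace ℝ (Fin n))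
        (fun _ => (0 : EuclideanSpace ℝ (Fin n))) v' _ _ {ω | c' ω ≤ 0}
        (Classical.decPred _) hs stronglyMeasurable_const hv'm
    refine (hwm.aestronglyMeasurable).congr ?_
    filter_upwards [hc'e, hv'e] with ω hcω hvω
    rw [← hcω, ← hvω]
  refine Integrable.mono' (hintκ.const_mul γhat) hFm ?_
  filter_upwards [hΞae] with ω hω
  by_cases hc : γhat * g (ξ ω) xhat + 1 ≤ 0
  · rw [if_pos hc, norm_zero]
    have := hκ0 (ξ ω)
    positivity
  · rw [if_neg hc, norm_smul, Real.norm_eq_abs, abs_of_nonneg hγhat0]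
    exact mul_le_mul_of_nonneg_left
      (bfp_grad_bound (g := g) (hlip := hlip) hX hκ0 (hΞdiff _ hω)) hγhat0

include hint hlip hintκ in
lemma bfp_key {xhat : EuclideanSpace ℝ (Fin n)} (hX : X ∈ nhds xhat)
    (hκ0 : ∀ z, 0 ≤ κ z)
    {Ξ : Set (EuclideanSpace ℝ (Fin m))} (hΞae : ∀ᵐ ω ∂P, ξ ω ∈ Ξ)
    (hΞdiff : ∀ z ∈ Ξ, ContDiffAt ℝ 1 (g z) xhat)
    {γhat : ℝ} (hγhat0 : 0 ≤ γhat)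
    (hezero : 0 < γhat → ∀ᵐ ω ∂P, γhat * g (ξ ω) xhat + 1 ≠ 0)
    {M : ℝ} (x : ℕ → EuclideanSpace ℝ (Fin n)) (γs : ℕ → ℝ)
    (hxX : ∀ k, x k ∈ X) (hxne : ∀ k, x k ≠ xhat)
    (hxlim : Tendsto x atTop (𝓝 xhat))
    (hγ0 : ∀ k, 0 ≤ γs k) (hγM : ∀ k, γs k ≤ M)
    (hγlim : Tendsto γs atTop (𝓝 γhat)) :
    Tendsto (fun k => ‖x k - xhat‖⁻¹ *
      (bfpPsi P ξ g (x k) (γs k) - bfpPsi P ξ g xhat (γs k) -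
        inner ℝ (∫ ω, (if γhat * g (ξ ω) xhat + 1 ≤ 0 then 0
          else γhat • gradient (g (ξ ω)) xhat) ∂P) (x k - xhat))) atTop (𝓝 0) := by
  classical
  have hxhatX : xhat ∈ X := mem_of_mem_nhds hX
  have hΞdiff' : ∀ z ∈ Ξ, DifferentiableAt ℝ (g z) xhat :=
    fun z hz => (hΞdiff z hz).differentiableAt one_ne_zero
  set F : Ω → EuclideanSpace ℝ (Fin n) := fun ω =>
    if γhat * g (ξ ω) xhat + 1 ≤ 0 then 0 else γhat • gradient (g (ξ ω)) xhat with hF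
  have hFint : Integrable F P :=
    bfp_F_integrable P ξ g hint hlip hintκ hX hκ0 hΞae hΞdiff' hγhat0
  have hFb : ∀ ω, ξ ω ∈ Ξ → ‖F ω‖ ≤ γhat * κ (ξ ω) := by
    intro ω hω
    by_cases hc : γhat * g (ξ ω) xhat + 1 ≤ 0
    · rw [hF]; dsimp only; rw [if_pos hc, norm_zero]
      have := hκ0 (ξ ω); positivity
    · rw [hF]; dsimp only
      rw [if_neg hc, norm_smul, Real.norm_eq_abs, abs_of_nonneg hγhat0]
      exact mul_le_mul_of_nonneg_left
        (bfp_grad_bound (g := g) (hlip := hlip) hX hκ0 (hΞdiff' _ hω)) hγhat0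
  set ρ : ℕ → Ω → ℝ := fun k ω => ‖x k - xhat‖⁻¹ *
    (max 0 (γs k * g (ξ ω) (x k) + 1) - max 0 (γs k * g (ξ ω) xhat + 1) -
      inner ℝ (F ω) (x k - xhat)) with hρ
  have hnorm_pos : ∀ k, (0:ℝ) < ‖x k - xhat‖ := by
    intro k
    rw [norm_pos_iff]
    exact sub_ne_zero_of_ne (hxne k)
  have hinner_int : ∀ k, Integrable (fun ω => (inner ℝ (F ω) (x k - xhat) : ℝ)) P :=
    fun k => hFint.inner_const _
  have hstep1 : ∀ k, ∫ ω, ρ k ω ∂P = ‖x k - xhat‖⁻¹ *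
      (bfpPsi P ξ g (x k) (γs k) - bfpPsi P ξ g xhat (γs k) -
        inner ℝ (∫ ω, F ω ∂P) (x k - xhat)) := by
    intro k
    rw [hρ]
    dsimp only
    rw [integral_const_mul]
    congr 1
    have hI1 : Integrable (fun ω => max 0 (γs k * g (ξ ω) (x k) + 1) -
        max 0 (γs k * g (ξ ω) xhat + 1)) P := by
      exact (bfp_integrable_u P ξ g hint _ _).sub (bfp_integrable_u P ξ g hint _ _)
    rw [integral_sub hI1 (hinner_int k),
      integral_sub (bfp_integrable_u P ξ g hint _ _) (bfp_integrable_u P ξ g hint _ _)]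
    simp only [bfpPsi]
    congr 1
    have h1 := integral_inner (𝕜 := ℝ) hFint (x k - xhat)
    calc ∫ ω, (inner ℝ (F ω) (x k - xhat) : ℝ) ∂P
        = ∫ ω, (inner ℝ (x k - xhat) (F ω) : ℝ) ∂P := by
          congr 1; ext ω; exact real_inner_comm _ _
      _ = inner ℝ (x k - xhat) (∫ ω, F ω ∂P) := h1
      _ = inner ℝ (∫ ω, F ω ∂P) (x k - xhat) := real_inner_comm _ _
  have hmain : Tendsto (fun k => ∫ ω, ρ k ω ∂P) atTop (𝓝 0) := by
    have hzero : (0:ℝ) = ∫ (_ : Ω), (0:ℝ) ∂P := by simp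
    rw [hzero]
    refine tendsto_integral_of_dominated_convergence
      (fun ω => (M + γhat) * κ (ξ ω)) ?_ (hintκ.const_mul _) ?_ ?_
    · intro k
      refine AEStronglyMeasurable.const_mul ?_ _
      exact (((bfp_integrable_u P ξ g hint _ _).1.sub
        (bfp_integrable_u P ξ g hint _ _).1).sub
        ((hinner_int k).1))
    · intro k
      filter_upwards [hΞae] with ω hω
      have hub : |max 0 (γs k * g (ξ ω) (x k) + 1) - max 0 (γs k * g (ξ ω) xhat + 1)|
          ≤ γs k * κ (ξ ω) * ‖x k - xhat‖ := by
        refine le_trans (bfp_abs_max_le _ _) ?_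
        rw [← mul_sub, abs_mul, abs_of_nonneg (hγ0 k), mul_assoc]
        exact mul_le_mul_of_nonneg_left
          (hlip (ξ ω) (x k) (hxX k) xhat hxhatX) (hγ0 k)
      have hib : |(inner ℝ (F ω) (x k - xhat) : ℝ)| ≤ γhat * κ (ξ ω) * ‖x k - xhat‖ := by
        refine le_trans (abs_real_inner_le_norm _ _) ?_
        exact mul_le_mul_of_nonneg_right (hFb ω hω) (norm_nonneg _)
      rw [Real.norm_eq_abs, hρ]
      dsimp only
      rw [abs_mul, abs_inv, abs_norm]
      have htri : |max 0 (γs k * g (ξ ω) (x k) + 1) - max 0 (γs k * g (ξ ω) xhat + 1) -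
          inner ℝ (F ω) (x k - xhat)| ≤ (γs k + γhat) * κ (ξ ω) * ‖x k - xhat‖ := by
        refine le_trans (abs_sub _ _) ?_
        calc _ ≤ γs k * κ (ξ ω) * ‖x k - xhat‖ + γhat * κ (ξ ω) * ‖x k - xhat‖ :=
              add_le_add hub hib
          _ = (γs k + γhat) * κ (ξ ω) * ‖x k - xhat‖ := by ring
      calc ‖x k - xhat‖⁻¹ * |_| ≤ ‖x k - xhat‖⁻¹ *
            ((γs k + γhat) * κ (ξ ω) * ‖x k - xhat‖) := by
            exact mul_le_mul_of_nonneg_left htri (by positivity)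
        _ = (γs k + γhat) * κ (ξ ω) := bfp_inv_mul_cancel (hnorm_pos k)
        _ ≤ (M + γhat) * κ (ξ ω) := by
            have := hκ0 (ξ ω)
            have := hγM k
            nlinarith
    · have hene : ∀ᵐ ω ∂P, (0 < γhat → γhat * g (ξ ω) xhat + 1 ≠ 0) := by
        rcases eq_or_lt_of_le hγhat0 with h0 | hpos
        · filter_upwards with ω hpos'
          exact absurd hpos' (by rw [← h0]; exact lt_irrefl 0)
        · filter_upwards [hezero hpos] with ω hω _
          exact hω
      filter_upwards [hΞae, hene] with ω hω hωe
      set z := ξ ω with hz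
      rcases eq_or_lt_of_le hγhat0 with h0 | hpos
      · -- γhat = 0 : F ω = 0 and the increment is O(γs k)
        have hF0 : F ω = 0 := by
          rw [hF]; dsimp only
          rw [if_neg (by rw [← h0]; norm_num), ← h0, zero_smul]
        refine squeeze_zero_norm (a := fun k => γs k * κ z) (fun k => ?_) ?_
        · rw [hρ]
          dsimp only
          rw [hF0, inner_zero_left, sub_zero, Real.norm_eq_abs, abs_mul, abs_inv, abs_norm]
          have hub : |max 0 (γs k * g z (x k) + 1) - max 0 (γs k * g z xhat + 1)|
              ≤ γs k * κ z * ‖x k - xhat‖ := by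
            refine le_trans (bfp_abs_max_le _ _) ?_
            rw [← mul_sub, abs_mul, abs_of_nonneg (hγ0 k), mul_assoc]
            exact mul_le_mul_of_nonneg_left (hlip z (x k) (hxX k) xhat hxhatX) (hγ0 k)
          calc ‖x k - xhat‖⁻¹ * |_| ≤ ‖x k - xhat‖⁻¹ * (γs k * κ z * ‖x k - xhat‖) :=
                mul_le_mul_of_nonneg_left hub (by positivity)
            _ = γs k * κ z := bfp_inv_mul_cancel (hnorm_pos k)
        · have : Tendsto γs atTop (𝓝 0) := by rwa [h0]
          simpa using this.mul_const (κ z)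
      · -- γhat > 0
        have hcne : γhat * g z xhat + 1 ≠ 0 := hωe hpos
        have hgz : Tendsto (fun k => g z (x k)) atTop (𝓝 (g z xhat)) :=
          ((hΞdiff z hω).continuousAt.tendsto).comp hxlim
        have hq1 : Tendsto (fun k => γs k * g z (x k) + 1) atTop
            (𝓝 (γhat * g z xhat + 1)) := by
          exact ((hγlim.mul hgz).add tendsto_const_nhds)
        have hq2 : Tendsto (fun k => γs k * g z xhat + 1) atTop
            (𝓝 (γhat * g z xhat + 1)) := by
          exact ((hγlim.mul_const _).add tendsto_const_nhds)
        rcases lt_or_gt_of_ne hcne with hneg | hposc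
        · -- c < 0 : eventually everything vanishes
          have hFz : F ω = 0 := by
            rw [hF]; dsimp only; rw [if_pos hneg.le]
          have h1 : ∀ᶠ k in atTop, γs k * g z (x k) + 1 < 0 :=
            hq1.eventually_lt_const hneg
          have h2 : ∀ᶠ k in atTop, γs k * g z xhat + 1 < 0 :=
            hq2.eventually_lt_const hneg
          refine Tendsto.congr' ?_ (tendsto_const_nhds (x := (0:ℝ)))
          filter_upwards [h1, h2] with k hk1 hk2
          rw [hρ]
          dsimp only
          rw [hFz, inner_zero_left, max_eq_left hk1.le, max_eq_left hk2.le]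
          ring
        · -- c > 0
          have hFz : F ω = γhat • gradient (g z) xhat := by
            rw [hF]; dsimp only; rw [if_neg (not_le.mpr hposc)]
          have hgr := ((hΞdiff z hω).differentiableAt one_ne_zero).hasGradientAt
          have hTk : Tendsto (fun k => ‖x k - xhat‖⁻¹ *
              ‖g z (x k) - g z xhat -
                inner ℝ (gradient (g z) xhat) (x k - xhat)‖) atTop (𝓝 0) :=
            ((hasGradientAt_iff_tendsto.mp hgr).comp hxlim)
          have hS : Tendsto (fun k => ‖x k - xhat‖⁻¹ *
              (g z (x k) - g z xhat - inner ℝ (gradient (g z) xhat) (x k - xhat)))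
              atTop (𝓝 0) := by
            refine squeeze_zero_norm (fun k => ?_) hTk
            rw [Real.norm_eq_abs, abs_mul, abs_inv, abs_norm, Real.norm_eq_abs]
          have hA : Tendsto (fun k => γs k * (‖x k - xhat‖⁻¹ *
              (g z (x k) - g z xhat - inner ℝ (gradient (g z) xhat) (x k - xhat))))
              atTop (𝓝 0) := by
            simpa using hγlim.mul hS
          have hB : Tendsto (fun k => (γs k - γhat) *
              (‖x k - xhat‖⁻¹ * inner ℝ (gradient (g z) xhat) (x k - xhat)))
              atTop (𝓝 0) := by
            refine squeeze_zero_norm (a := fun k => |γs k - γhat| * ‖gradient (g z) xhat‖)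
              (fun k => ?_) ?_
            · rw [Real.norm_eq_abs, abs_mul]
              refine mul_le_mul_of_nonneg_left ?_ (abs_nonneg _)
              rw [abs_mul, abs_inv, abs_norm]
              calc ‖x k - xhat‖⁻¹ * |(inner ℝ (gradient (g z) xhat) (x k - xhat) : ℝ)|
                  ≤ ‖x k - xhat‖⁻¹ * (‖gradient (g z) xhat‖ * ‖x k - xhat‖) :=
                    mul_le_mul_of_nonneg_left (abs_real_inner_le_norm _ _) (by positivity)
                _ = ‖gradient (g z) xhat‖ := bfp_inv_mul_cancel (hnorm_pos k)
            · have h1 : Tendsto (fun k => γs k - γhat) atTop (𝓝 (γhat - γhat)) :=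
                hγlim.sub tendsto_const_nhds
              rw [sub_self] at h1
              simpa using h1.abs.mul_const ‖gradient (g z) xhat‖
          have hAB := hA.add hB
          rw [add_zero] at hAB
          refine Tendsto.congr' ?_ hAB
          have h1 : ∀ᶠ k in atTop, 0 < γs k * g z (x k) + 1 :=
            hq1.eventually_const_lt hposc
          have h2 : ∀ᶠ k in atTop, 0 < γs k * g z xhat + 1 :=
            hq2.eventually_const_lt hposc
          filter_upwards [h1, h2] with k hk1 hk2
          rw [hρ]
          dsimp only
          rw [hFz, max_eq_right hk1.le, max_eq_right hk2.le, real_inner_smul_left]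
          have hne := (hnorm_pos k).ne'
          field_simp
          ring
  refine hmain.congr fun k => ?_
  rw [hstep1 k]
end BFPAux

/-- (Theorem 2.) Under assumptions (a)–(f) on a neighborhood `X`
of `xhat` — a.s. continuous differentiability of `g(ξ,·)`, a uniform positive
mass on `{g(ξ,x) ≥ ε}`, an integrable bound `h`, an integrable Lipschitz
modulus `κ`, `prob{γ g(ξ,x) = −1} = 0` for `γ > 0`, and uniqueness of the
minimizer `γhat` in the Norton–Uryasev formula at `xhat` — the buffered
failure probability `p̄(x) = inf_{γ ≥ 0} E[max(0, γ g(ξ,x) + 1)]` is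
differentiable at `xhat` with gradient `E[F(ξ, xhat, γhat)]`, where
`F(ξ, xhat, γhat) = 0` if `γhat g(ξ,xhat) + 1 ≤ 0` and
`F(ξ, xhat, γhat) = γhat ∇ₓg(ξ,xhat)` otherwise. -/
theorem buffered_failure_probability_gradient
    {m n : ℕ} {Ω : Type*} [MeasurableSpace Ω] (P : Measure Ω) [IsProbabilityMeasure P]
    (ξ : Ω → EuclideanSpace ℝ (Fin m)) (hξ : Measurable ξ)
    (g : EuclideanSpace ℝ (Fin m) → EuclideanSpace ℝ (Fin n) → ℝ)
    (hint : ∀ x : EuclideanSpace ℝ (Fin n), Integrable (fun ω => g (ξ ω) x) P)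
    (xhat : EuclideanSpace ℝ (Fin n)) (X : Set (EuclideanSpace ℝ (Fin n)))
    (hX : X ∈ nhds xhat)
    (ha : ∀ x ∈ X, ∃ Ξ : Set (EuclideanSpace ℝ (Fin m)), MeasurableSet Ξ ∧
      P {ω | ξ ω ∈ Ξ} = 1 ∧ ∀ z ∈ Ξ, ContDiffAt ℝ 1 (g z) x)
    (hb : ∃ ε : ℝ, 0 < ε ∧ ∃ δ ∈ Set.Ioc (0 : ℝ) 1, ∀ x ∈ X,
      ENNReal.ofReal δ ≤ P {ω | ε ≤ g (ξ ω) x})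
    (hc : ∃ h : EuclideanSpace ℝ (Fin m) → ℝ, Measurable h ∧ (∀ z, 0 ≤ h z) ∧
      Integrable (fun ω => h (ξ ω)) P ∧
      ∀ z : EuclideanSpace ℝ (Fin m), ∀ x ∈ X, |g z x| ≤ h z)
    (hd : ∃ κ : EuclideanSpace ℝ (Fin m) → ℝ, Measurable κ ∧ (∀ z, 0 ≤ κ z) ∧
      Integrable (fun ω => κ (ξ ω)) P ∧
      ∀ z : EuclideanSpace ℝ (Fin m), ∀ x ∈ X, ∀ x' ∈ X,
        |g z x - g z x'| ≤ κ z * ‖x - x'‖)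
    (he : ∀ γ : ℝ, 0 < γ → ∀ x ∈ X, P {ω | γ * g (ξ ω) x = -1} = 0)
    (γhat : ℝ)
    (hf : {γ : ℝ | 0 ≤ γ ∧ ∀ γ' : ℝ, 0 ≤ γ' →
        (∫ ω, max 0 (γ * g (ξ ω) xhat + 1) ∂P) ≤
          ∫ ω, max 0 (γ' * g (ξ ω) xhat + 1) ∂P} = {γhat}) :
    HasGradientAt
      (fun x => ⨅ γ : Set.Ici (0 : ℝ), ∫ ω, max 0 ((γ : ℝ) * g (ξ ω) x + 1) ∂P)
      (∫ ω, (if γhat * g (ξ ω) xhat + 1 ≤ 0 then 0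
        else γhat • gradient (g (ξ ω)) xhat) ∂P) xhat := by
  classical
  obtain ⟨ε, hε, δ, hδIoc, hbb⟩ := hb
  obtain ⟨h, hmeas, hpos, hinth, hbound⟩ := hc
  obtain ⟨κ, hκmeas, hκ0, hintκ, hlip⟩ := hd
  have hxhatX : xhat ∈ X := mem_of_mem_nhds hX
  obtain ⟨Ξ, hΞm, hΞP, hΞdiff⟩ := ha xhat hxhatX
  have hδ : 0 < δ := hδIoc.1
  set M : ℝ := 1/(δ*ε) with hM
  have hΞae : ∀ᵐ ω ∂P, ξ ω ∈ Ξ := by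
    rw [ae_iff]
    have hms : MeasurableSet {ω | ξ ω ∈ Ξ} := hξ hΞm
    have hcompl : {ω | ¬ ξ ω ∈ Ξ} = {ω | ξ ω ∈ Ξ}ᶜ := rfl
    rw [hcompl, measure_compl hms (measure_ne_top _ _), hΞP, measure_univ, tsub_self]
  -- facts about γhat
  have hγhat_mem : γhat ∈ {γ : ℝ | 0 ≤ γ ∧ ∀ γ' : ℝ, 0 ≤ γ' →
      (∫ ω, max 0 (γ * g (ξ ω) xhat + 1) ∂P) ≤
        ∫ ω, max 0 (γ' * g (ξ ω) xhat + 1) ∂P} := by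
    rw [hf]; rfl
  obtain ⟨hγhat0, hγhatmin0⟩ := hγhat_mem
  have hγhatmin : ∀ γ' : ℝ, 0 ≤ γ' → bfpPsi P ξ g xhat γhat ≤ bfpPsi P ξ g xhat γ' :=
    hγhatmin0
  have huniq : ∀ γ : ℝ, 0 ≤ γ →
      (∀ γ' : ℝ, 0 ≤ γ' → bfpPsi P ξ g xhat γ ≤ bfpPsi P ξ g xhat γ') → γ = γhat := by
    intro γ h1 h2
    have hmem : γ ∈ {γ : ℝ | 0 ≤ γ ∧ ∀ γ' : ℝ, 0 ≤ γ' →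
        (∫ ω, max 0 (γ * g (ξ ω) xhat + 1) ∂P) ≤
          ∫ ω, max 0 (γ' * g (ξ ω) xhat + 1) ∂P} := ⟨h1, h2⟩
    rw [hf] at hmem
    exact hmem
  have hψxhat : (⨅ γ : Set.Ici (0:ℝ), bfpPsi P ξ g xhat ↑γ) = bfpPsi P ξ g xhat γhat := by
    obtain ⟨γx, hmem, hgmin, heq⟩ :=
      bfp_exists_min P ξ g hint hbound hinth hpos hε hδ hxhatX (hbb xhat hxhatX)
    rw [heq, huniq γx hmem.1 hgmin]
  have hγhatM : γhat ≤ M := by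
    refine bfp_min_le_M P ξ g hint hε hδ (hbb xhat hxhatX) hγhat0 ?_
    have := hγhatmin 0 le_rfl
    rwa [bfp_psi_zero] at this
  have hezero : 0 < γhat → ∀ᵐ ω ∂P, γhat * g (ξ ω) xhat + 1 ≠ 0 := by
    intro hpos'
    have hkey := he γhat hpos' xhat hxhatX
    rw [ae_iff]
    convert hkey using 2
    ext ω
    simp only [Set.mem_setOf_eq, not_not]
    constructor
    · intro h'; linarith
    · intro h'; linarith
  show HasGradientAt (fun x => ⨅ γ : Set.Ici (0:ℝ), bfpPsi P ξ g x ↑γ)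
    (∫ ω, (if γhat * g (ξ ω) xhat + 1 ≤ 0 then 0
      else γhat • gradient (g (ξ ω)) xhat) ∂P) xhat
  rw [hasGradientAt_iff_tendsto]
  rw [← nhdsNE_sup_pure xhat, Filter.tendsto_sup]
  constructor
  · -- along 𝓝[≠] xhat, via sequences
    rw [tendsto_iff_seq_tendsto]
    intro y hy
    rw [tendsto_nhdsWithin_iff] at hy
    obtain ⟨hylim, hyne⟩ := hy
    have hyX : ∀ᶠ k in atTop, y k ∈ X := hylim.eventually hX
    have hev : ∀ᶠ k in atTop, y k ∈ X ∧ y k ≠ xhat := by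
      filter_upwards [hyX, hyne] with k h1 h2
      exact ⟨h1, h2⟩
    obtain ⟨N, hN⟩ := eventually_atTop.mp hev
    rw [show ((fun x' => ‖x' - xhat‖⁻¹ *
        ‖(⨅ γ : Set.Ici (0:ℝ), bfpPsi P ξ g x' ↑γ) -
          (⨅ γ : Set.Ici (0:ℝ), bfpPsi P ξ g xhat ↑γ) -
          inner ℝ (∫ ω, (if γhat * g (ξ ω) xhat + 1 ≤ 0 then 0
            else γhat • gradient (g (ξ ω)) xhat) ∂P) (x' - xhat)‖) ∘ y)
      = fun k => ‖y k - xhat‖⁻¹ *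
        ‖(⨅ γ : Set.Ici (0:ℝ), bfpPsi P ξ g (y k) ↑γ) -
          (⨅ γ : Set.Ici (0:ℝ), bfpPsi P ξ g xhat ↑γ) -
          inner ℝ (∫ ω, (if γhat * g (ξ ω) xhat + 1 ≤ 0 then 0
            else γhat • gradient (g (ξ ω)) xhat) ∂P) (y k - xhat)‖ from rfl]
    rw [← tendsto_add_atTop_iff_nat N]
    set yk : ℕ → EuclideanSpace ℝ (Fin n) := fun k => y (k + N) with hyk
    have hykX : ∀ k, yk k ∈ X := fun k => (hN _ (Nat.le_add_left N k)).1
    have hykne : ∀ k, yk k ≠ xhat := fun k => (hN _ (Nat.le_add_left N k)).2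
    have hyklim : Tendsto yk atTop (𝓝 xhat) := hylim.comp (tendsto_add_atTop_nat N)
    -- minimizers at yk
    have hminsel : ∀ k, ∃ γx : ℝ, γx ∈ Set.Icc (0:ℝ) M ∧
        (∀ γ' : ℝ, 0 ≤ γ' → bfpPsi P ξ g (yk k) γx ≤ bfpPsi P ξ g (yk k) γ') ∧
        (⨅ γ : Set.Ici (0:ℝ), bfpPsi P ξ g (yk k) ↑γ) = bfpPsi P ξ g (yk k) γx :=
      fun k => bfp_exists_min P ξ g hint hbound hinth hpos hε hδ (hykX k) (hbb _ (hykX k))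
    choose γs hγmem hγmin hγeq using hminsel
    have hγ0 : ∀ k, 0 ≤ γs k := fun k => (hγmem k).1
    have hγM : ∀ k, γs k ≤ M := fun k => (hγmem k).2
    have hHnn : (0:ℝ) ≤ ∫ ω, h (ξ ω) ∂P := integral_nonneg fun ω => hpos _
    -- convergence of the minimizers
    have hγlim : Tendsto γs atTop (𝓝 γhat) := by
      apply tendsto_of_subseq_tendsto
      intro ns hns
      obtain ⟨γstar, hγstarmem, ms, hms, hγstarlim⟩ :=
        (isCompact_Icc (a := (0:ℝ)) (b := M)).tendsto_subseq (fun j => hγmem (ns j))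
      refine ⟨ms, ?_⟩
      have hsubxlim : Tendsto (fun j => yk (ns (ms j))) atTop (𝓝 xhat) :=
        hyklim.comp (hns.comp hms.tendsto_atTop)
      have hdist0 : Tendsto (fun j => ‖yk (ns (ms j)) - xhat‖) atTop (𝓝 0) := by
        have := tendsto_iff_dist_tendsto_zero.mp hsubxlim
        refine this.congr fun j => ?_
        rw [dist_eq_norm]
      have hgdist0 : Tendsto (fun j => |γs (ns (ms j)) - γstar|) atTop (𝓝 0) := by
        have := tendsto_iff_dist_tendsto_zero.mp hγstarlim
        refine this.congr fun j => ?_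
        rw [Function.comp_apply, Real.dist_eq]
      have hkey : ∀ γ' : ℝ, 0 ≤ γ' → bfpPsi P ξ g xhat γstar ≤ bfpPsi P ξ g xhat γ' := by
        intro γ' hγ'
        have hle : ∀ j, bfpPsi P ξ g (yk (ns (ms j))) (γs (ns (ms j)))
            ≤ bfpPsi P ξ g (yk (ns (ms j))) γ' := fun j => hγmin _ γ' hγ'
        have hL : Tendsto (fun j => bfpPsi P ξ g (yk (ns (ms j))) (γs (ns (ms j))))
            atTop (𝓝 (bfpPsi P ξ g xhat γstar)) := by
          rw [tendsto_iff_dist_tendsto_zero]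
          refine squeeze_zero (g := fun j => (∫ ω, h (ξ ω) ∂P) * |γs (ns (ms j)) - γstar| +
            γstar * (∫ ω, κ (ξ ω) ∂P) * ‖yk (ns (ms j)) - xhat‖)
            (fun j => dist_nonneg) (fun j => ?_) ?_
          · exact (dist_triangle (bfpPsi P ξ g (yk (ns (ms j))) (γs (ns (ms j))))
              (bfpPsi P ξ g (yk (ns (ms j))) γstar) (bfpPsi P ξ g xhat γstar)).trans
              (add_le_add
                (by rw [Real.dist_eq]
                    exact (bfp_psi_lip_gamma P ξ g hint hbound hinth
                      (hykX (ns (ms j))) _ _).trans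
                      (le_of_eq (by rw [mul_comm])))
                (by rw [Real.dist_eq]
                    exact bfp_psi_lip_x P ξ g hint hlip hintκ
                      (hykX (ns (ms j))) hxhatX hγstarmem.1))
          · have h1 : Tendsto (fun j => (∫ ω, h (ξ ω) ∂P) * |γs (ns (ms j)) - γstar|)
                atTop (𝓝 0) := by
              simpa using hgdist0.const_mul (∫ ω, h (ξ ω) ∂P)
            have h2 : Tendsto (fun j =>
                γstar * (∫ ω, κ (ξ ω) ∂P) * ‖yk (ns (ms j)) - xhat‖) atTop (𝓝 0) := by
              simpa using hdist0.const_mul (γstar * (∫ ω, κ (ξ ω) ∂P))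
            simpa using h1.add h2
        have hR : Tendsto (fun j => bfpPsi P ξ g (yk (ns (ms j))) γ')
            atTop (𝓝 (bfpPsi P ξ g xhat γ')) := by
          rw [tendsto_iff_dist_tendsto_zero]
          refine squeeze_zero (g := fun j => γ' * (∫ ω, κ (ξ ω) ∂P) * ‖yk (ns (ms j)) - xhat‖)
            (fun j => dist_nonneg) (fun j => ?_) ?_
          · rw [Real.dist_eq]
            exact bfp_psi_lip_x P ξ g hint hlip hintκ (hykX (ns (ms j))) hxhatX hγ'
          · simpa using hdist0.const_mul (γ' * (∫ ω, κ (ξ ω) ∂P))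
        exact le_of_tendsto_of_tendsto' hL hR hle
      have hstar_eq : γstar = γhat := huniq γstar hγstarmem.1 hkey
      rwa [hstar_eq] at hγstarlim
    -- the sandwich
    have hA := bfp_key P ξ g hint hlip hintκ hX hκ0 hΞae hΞdiff hγhat0 hezero
      yk γs hykX hykne hyklim hγ0 hγM hγlim
    have hB := bfp_key P ξ g hint hlip hintκ hX hκ0 hΞae hΞdiff hγhat0 hezero
      yk (fun _ => γhat) hykX hykne hyklim (fun _ => hγhat0) (fun _ => hγhatM)
      tendsto_const_nhds
    have hmid : Tendsto (fun k => ‖yk k - xhat‖⁻¹ *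
        ((⨅ γ : Set.Ici (0:ℝ), bfpPsi P ξ g (yk k) ↑γ) -
          (⨅ γ : Set.Ici (0:ℝ), bfpPsi P ξ g xhat ↑γ) -
          inner ℝ (∫ ω, (if γhat * g (ξ ω) xhat + 1 ≤ 0 then 0
            else γhat • gradient (g (ξ ω)) xhat) ∂P) (yk k - xhat))) atTop (𝓝 0) := by
      refine tendsto_of_tendsto_of_tendsto_of_le_of_le hA hB (fun k => ?_) (fun k => ?_)
      · have hinv : (0:ℝ) ≤ ‖yk k - xhat‖⁻¹ := by positivity
        refine mul_le_mul_of_nonneg_left ?_ hinv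
        have e1 := hγeq k
        have e2 : bfpPsi P ξ g xhat γhat ≤ bfpPsi P ξ g xhat (γs k) :=
          hγhatmin (γs k) (hγ0 k)
        rw [e1, hψxhat]
        linarith
      · have hinv : (0:ℝ) ≤ ‖yk k - xhat‖⁻¹ := by positivity
        refine mul_le_mul_of_nonneg_left ?_ hinv
        have e1 := hγeq k
        have e2 : bfpPsi P ξ g (yk k) (γs k) ≤ bfpPsi P ξ g (yk k) γhat :=
          hγmin k γhat hγhat0
        rw [e1, hψxhat]
        linarith
    have habs := hmid.abs
    rw [abs_zero] at habs
    refine habs.congr fun k => ?_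
    rw [abs_mul, abs_inv, abs_norm, Real.norm_eq_abs]
  · -- pure part
    have h0 : (fun x' => ‖x' - xhat‖⁻¹ *
        ‖(⨅ γ : Set.Ici (0:ℝ), bfpPsi P ξ g x' ↑γ) -
          (⨅ γ : Set.Ici (0:ℝ), bfpPsi P ξ g xhat ↑γ) -
          inner ℝ (∫ ω, (if γhat * g (ξ ω) xhat + 1 ≤ 0 then 0
            else γhat • gradient (g (ξ ω)) xhat) ∂P) (x' - xhat)‖) xhat = 0 := by
      simp
    have := tendsto_pure_nhds (fun x' => ‖x' - xhat‖⁻¹ *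
        ‖(⨅ γ : Set.Ici (0:ℝ), bfpPsi P ξ g x' ↑γ) -
          (⨅ γ : Set.Ici (0:ℝ), bfpPsi P ξ g xhat ↑γ) -
          inner ℝ (∫ ω, (if γhat * g (ξ ω) xhat + 1 ≤ 0 then 0
            else γhat • gradient (g (ξ ω)) xhat) ∂P) (x' - xhat)‖) xhat
    simpa using this
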